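/- arXiv:math/9405212 — 2 statements merged into one kernel-verified Lean document; each statement's English description precedes it below -/
import Mathlib

section
/- The Laguerre polynomials are orthonormal with respect to the weight e^{−x} on [0, ∞): for all natural numbers m and n, ∫₀^∞ L_m(x) L_n(x) e^{−x} dx = δ_{mn}. -/
open Nat

section Aux
open Finset MeasureTheory Real fwdDiff

lemma fwdDiff_iter_zero_fun (s : ℕ) :
    (fwdDiff 1)^[s] (fun _ : ℕ => (0 : ℤ)) = fun _ => 0 := by
  induction s with
  | zero => simp
  | succ s ih => rw [Function.iterate_succ_apply, fwdDiff_const, ih]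

lemma diff_at (n j : ℕ) :
    (fwdDiff 1)^[n] (fun x : ℕ => (x.choose j : ℤ)) j = (j.choose n : ℤ) := by
  by_cases h : n ≤ j
  · obtain ⟨d, rfl⟩ := Nat.exists_eq_add_of_le h
    rw [fwdDiff_iter_choose d n]
    rw [← Nat.choose_symm (Nat.le_add_right n d)]
    simp
  · push_neg at h
    obtain ⟨s, hs⟩ := Nat.exists_eq_add_of_lt h
    rw [Nat.choose_eq_zero_of_lt h, hs]
    have hn : j + s + 1 = (s + 1) + j := by omega
    rw [hn, Function.iterate_add_apply]
    have h0 : (fwdDiff 1)^[j] (fun x : ℕ => (x.choose j : ℤ)) = fun _ => 1 := by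
      have := fwdDiff_iter_choose (j := 0) (k := j)
      simpa using this
    rw [h0, Function.iterate_succ_apply, fwdDiff_const, fwdDiff_iter_zero_fun]
    simp

lemma alt_sum_eq (N : ℕ) (f : ℕ → ℤ) (y : ℕ) :
    ∑ k ∈ range (N + 1), (-1 : ℤ) ^ k * (N.choose k) * f (y + k)
      = (-1) ^ N * (fwdDiff 1)^[N] f y := by
  rw [fwdDiff_iter_eq_sum_shift, Finset.mul_sum]
  refine Finset.sum_congr rfl fun k hk => ?_
  rw [Finset.mem_range] at hk
  have hkN : k ≤ N := Nat.lt_succ_iff.mp hk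
  have hsign : (-1 : ℤ) ^ N * (-1 : ℤ) ^ (N - k) = (-1) ^ k := by
    rw [← pow_add]
    have : N + (N - k) = 2 * (N - k) + k := by omega
    rw [this, pow_add, pow_mul]
    simp
  simp only [smul_eq_mul, mul_one]
  rw [← hsign]; ring

lemma innerSumId (n j : ℕ) :
    ∑ k ∈ range (n + 1), (-1 : ℤ) ^ k * (n.choose k) * ((j + k).choose j)
      = (-1) ^ n * (j.choose n) := by
  have := alt_sum_eq n (fun x => (x.choose j : ℤ)) j
  rw [this, diff_at]

lemma outerSumId (m n : ℕ) :
    ∑ j ∈ range (m + 1), (-1 : ℤ) ^ j * (m.choose j) * (j.choose n)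
      = (-1) ^ m * (if m = n then 1 else 0) := by
  have := alt_sum_eq m (fun x => (x.choose n : ℤ)) 0
  simp only [zero_add] at this
  rw [this, fwdDiff_iter_choose_zero]

lemma combi (m n : ℕ) :
    ∑ j ∈ range (m + 1), ∑ k ∈ range (n + 1),
      (-1 : ℝ) ^ (j + k) * (m.choose j) * (n.choose k) * ((j + k).choose j)
      = if m = n then 1 else 0 := by
  have key : ∑ j ∈ range (m + 1), ∑ k ∈ range (n + 1),
      (-1 : ℤ) ^ (j + k) * (m.choose j) * (n.choose k) * ((j + k).choose j)
      = if m = n then 1 else 0 := by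
    have : ∀ j, ∑ k ∈ range (n + 1),
        (-1 : ℤ) ^ (j + k) * (m.choose j) * (n.choose k) * ((j + k).choose j)
        = (-1) ^ j * (m.choose j) * ((-1) ^ n * (j.choose n)) := by
      intro j
      rw [← innerSumId n j, Finset.mul_sum]
      refine Finset.sum_congr rfl fun k _ => ?_
      rw [pow_add]; ring
    simp_rw [this]
    have : ∑ j ∈ range (m + 1),
        (-1 : ℤ) ^ j * (m.choose j) * ((-1) ^ n * (j.choose n))
        = (-1) ^ n * ∑ j ∈ range (m + 1), (-1 : ℤ) ^ j * (m.choose j) * (j.choose n) := by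
      rw [Finset.mul_sum]; refine Finset.sum_congr rfl fun j _ => by ring
    rw [this, outerSumId]
    rcases eq_or_ne m n with rfl | h
    · simp [← pow_add, ← two_mul, pow_mul]
    · simp [h]
  have := congrArg (fun z : ℤ => (z : ℝ)) key
  push_cast at this
  convert this using 2 <;> simp

lemma integrable_pow_exp (k : ℕ) :
    IntegrableOn (fun x : ℝ => x ^ k * Real.exp (-x)) (Set.Ioi 0) := by
  have h := Real.GammaIntegral_convergent (s := (k : ℝ) + 1) (by positivity)
  refine h.congr_fun (fun x _ => ?_) measurableSet_Ioi
  rw [add_sub_cancel_right]; beta_reduce; rw [Real.rpow_natCast, mul_comm]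

lemma integral_pow_exp (k : ℕ) :
    ∫ x in Set.Ioi (0 : ℝ), x ^ k * Real.exp (-x) = (k ! : ℝ) := by
  have h := Real.Gamma_eq_integral (s := (k : ℝ) + 1) (by positivity)
  have h2 : Real.Gamma ((k : ℝ) + 1) = (k ! : ℝ) := by
    exact_mod_cast Real.Gamma_nat_eq_factorial k
  rw [← h2, h]
  refine setIntegral_congr_fun measurableSet_Ioi fun x hx => ?_
  rw [add_sub_cancel_right, Real.rpow_natCast, mul_comm]

end Aux

open Finset MeasureTheory Real fwdDiff

/-- The `n`-th Laguerre polynomial, `L_n(x) = ∑_{k=0}^{n} (−1)^k (n choose k) x^k / k!`. -/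
noncomputable def laguerre (n : ℕ) (x : ℝ) : ℝ :=
  ∑ k ∈ Finset.range (n + 1), (-1 : ℝ) ^ k * (n.choose k : ℝ) * x ^ k / (k ! : ℝ)

/-- The Laguerre polynomials are orthonormal with respect to the weight `e^{−x}` on `[0, ∞)`:
`∫₀^∞ L_m(x) L_n(x) e^{−x} dx = δ_{mn}`. -/
theorem laguerre_orthonormal (m n : ℕ) :
    ∫ x in Set.Ioi (0 : ℝ), laguerre m x * laguerre n x * Real.exp (-x) =
      if m = n then 1 else 0 := by
  have h1 : ∀ x : ℝ, laguerre m x * laguerre n x * Real.exp (-x)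
      = ∑ j ∈ range (m + 1), ∑ k ∈ range (n + 1),
          ((-1 : ℝ) ^ (j + k) * (m.choose j) * (n.choose k) / ((j ! : ℝ) * (k ! : ℝ)))
            * (x ^ (j + k) * Real.exp (-x)) := by
    intro x
    rw [laguerre, laguerre, Finset.sum_mul_sum, Finset.sum_mul]
    refine Finset.sum_congr rfl fun j _ => ?_
    rw [Finset.sum_mul]
    refine Finset.sum_congr rfl fun k _ => ?_
    rw [pow_add, pow_add]
    ring
  simp_rw [h1]
  rw [integral_finset_sum _ (fun j _ => integrable_finset_sum _
    (fun k _ => ((integrable_pow_exp (j + k)).const_mul _)))]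
  have h2 : ∀ j ∈ range (m + 1),
      (∫ x in Set.Ioi (0 : ℝ), ∑ k ∈ range (n + 1),
          ((-1 : ℝ) ^ (j + k) * (m.choose j) * (n.choose k) / ((j ! : ℝ) * (k ! : ℝ)))
            * (x ^ (j + k) * Real.exp (-x)))
      = ∑ k ∈ range (n + 1),
          (-1 : ℝ) ^ (j + k) * (m.choose j) * (n.choose k) * ((j + k).choose j) := by
    intro j _
    rw [integral_finset_sum _ (fun k _ => ((integrable_pow_exp (j + k)).const_mul _))]
    refine Finset.sum_congr rfl fun k _ => ?_
    rw [MeasureTheory.integral_const_mul, integral_pow_exp]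
    have hfact : ((j + k)! : ℝ) = ((j + k).choose j : ℝ) * (j ! : ℝ) * (k ! : ℝ) := by
      exact_mod_cast congrArg (Nat.cast : ℕ → ℝ)
        (by rw [← Nat.choose_mul_factorial_mul_factorial (Nat.le_add_right j k),
              Nat.add_sub_cancel_left])
    rw [hfact]
    have hj : (j ! : ℝ) ≠ 0 := by positivity
    have hk : (k ! : ℝ) ≠ 0 := by positivity
    field_simp
  rw [Finset.sum_congr rfl h2]
  exact combi m n
end

section
/- For all natural numbers n₁, n₂, n₃, the signed Laguerre linearization coefficient E(n₁, n₂, n₃) = (−1)^{n₁+n₂+n₃} ∫₀^∞ L_{n₁}(x) L_{n₂}(x) L_{n₃}(x) e^{−x} dx is a nonnegative integer. -/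
open Nat

namespace LagAux
open Real Set MeasureTheory Finset


/-- signed binomial coefficient -/
noncomputable def g (n i : ℕ) : ℝ := (-1) ^ i * (n.choose i : ℝ)

lemma g_zero (n : ℕ) : g n 0 = 1 := by simp [g]

lemma g_succ (n i : ℕ) : g (n+1) (i+1) = g n (i+1) - g n i := by
  simp only [g, Nat.choose_succ_succ, pow_succ]
  push_cast; ring

lemma g_eq_zero {n i : ℕ} (h : n < i) : g n i = 0 := by
  simp [g, Nat.choose_eq_zero_of_lt h]

/-- trinomial coefficient as a real number -/
noncomputable def T (i j k : ℕ) : ℝ := ((i+j+k)! : ℝ) / ((i ! : ℝ) * (j ! : ℝ) * (k ! : ℝ))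

lemma T_zero (i : ℕ) : T i 0 0 = 1 := by
  simp [T, Nat.factorial_ne_zero]

lemma pascal3 (i j k : ℕ) :
    T (i+1) (j+1) (k+1) = T i (j+1) (k+1) + T (i+1) j (k+1) + T (i+1) (j+1) k := by
  have e1 : i+1+(j+1)+(k+1) = (i+j+k+2)+1 := by omega
  have e2 : i+(j+1)+(k+1) = (i+j+k+1)+1 := by omega
  have e3 : i+1+j+(k+1) = (i+j+k+1)+1 := by omega
  have e4 : i+1+(j+1)+k = (i+j+k+1)+1 := by omega
  have e5 : (i+j+k+2) = (i+j+k+1)+1 := by omega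
  simp only [T, e1, e2, e3, e4, e5, Nat.factorial_succ]
  have h1 : (i ! : ℝ) ≠ 0 := Nat.cast_ne_zero.2 (Nat.factorial_ne_zero i)
  have h2 : (j ! : ℝ) ≠ 0 := Nat.cast_ne_zero.2 (Nat.factorial_ne_zero j)
  have h3 : (k ! : ℝ) ≠ 0 := Nat.cast_ne_zero.2 (Nat.factorial_ne_zero k)
  have h4 : ((i+j+k+1)! : ℝ) ≠ 0 := Nat.cast_ne_zero.2 (Nat.factorial_ne_zero _)
  field_simp
  push_cast
  ring

lemma pascalA (j k : ℕ) : T 0 (j+1) (k+1) = T 0 j (k+1) + T 0 (j+1) k := by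
  have e1 : 0+(j+1)+(k+1) = (j+k+1)+1 := by omega
  have e2 : 0+j+(k+1) = (j+k)+1 := by omega
  have e3 : 0+(j+1)+k = (j+k)+1 := by omega
  have e5 : (j+k+1) = (j+k)+1 := by omega
  simp only [T, e1, e2, e3, e5, Nat.factorial_succ]
  have h2 : (j ! : ℝ) ≠ 0 := Nat.cast_ne_zero.2 (Nat.factorial_ne_zero j)
  have h3 : (k ! : ℝ) ≠ 0 := Nat.cast_ne_zero.2 (Nat.factorial_ne_zero k)
  have h4 : ((j+k)! : ℝ) ≠ 0 := Nat.cast_ne_zero.2 (Nat.factorial_ne_zero _)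
  field_simp
  push_cast
  ring

lemma pascalB (i k : ℕ) : T (i+1) 0 (k+1) = T i 0 (k+1) + T (i+1) 0 k := by
  have e1 : i+1+0+(k+1) = (i+k+1)+1 := by omega
  have e2 : i+0+(k+1) = (i+k)+1 := by omega
  have e3 : i+1+0+k = (i+k)+1 := by omega
  have e5 : (i+k+1) = (i+k)+1 := by omega
  simp only [T, e1, e2, e3, e5, Nat.factorial_succ]
  have h2 : (i ! : ℝ) ≠ 0 := Nat.cast_ne_zero.2 (Nat.factorial_ne_zero i)
  have h3 : (k ! : ℝ) ≠ 0 := Nat.cast_ne_zero.2 (Nat.factorial_ne_zero k)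
  have h4 : ((i+k)! : ℝ) ≠ 0 := Nat.cast_ne_zero.2 (Nat.factorial_ne_zero _)
  field_simp
  push_cast
  ring

lemma pascalC (i j : ℕ) : T (i+1) (j+1) 0 = T i (j+1) 0 + T (i+1) j 0 := by
  have e1 : i+1+(j+1)+0 = (i+j+1)+1 := by omega
  have e2 : i+(j+1)+0 = (i+j)+1 := by omega
  have e3 : i+1+j+0 = (i+j)+1 := by omega
  have e5 : (i+j+1) = (i+j)+1 := by omega
  simp only [T, e1, e2, e3, e5, Nat.factorial_succ]
  have h2 : (i ! : ℝ) ≠ 0 := Nat.cast_ne_zero.2 (Nat.factorial_ne_zero i)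
  have h3 : (j ! : ℝ) ≠ 0 := Nat.cast_ne_zero.2 (Nat.factorial_ne_zero j)
  have h4 : ((i+j)! : ℝ) ≠ 0 := Nat.cast_ne_zero.2 (Nat.factorial_ne_zero _)
  field_simp
  push_cast
  ring


/-- the basic summation-by-parts / shift lemma -/
lemma shift {a M : ℕ} (h : a < M) (f : ℕ → ℝ) :
    ∑ i ∈ range (M+1), g (a+1) i * f i = ∑ i ∈ range (M+1), g a i * (f i - f (i+1)) := by
  have L : ∑ i ∈ range (M+1), g (a+1) i * f i
      = g (a+1) 0 * f 0 + ∑ i ∈ range M, g (a+1) (i+1) * f (i+1) := by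
    rw [Finset.sum_range_succ' (fun i => g (a+1) i * f i) M]; ring
  have R : ∑ i ∈ range (M+1), g a i * (f i - f (i+1))
      = (g a 0 * f 0 + ∑ i ∈ range M, g a (i+1) * f (i+1))
        - (∑ i ∈ range M, g a i * f (i+1) + g a M * f (M+1)) := by
    rw [show (∑ i ∈ range (M+1), g a i * (f i - f (i+1)))
        = (∑ i ∈ range (M+1), g a i * f i) - (∑ i ∈ range (M+1), g a i * f (i+1)) by
      rw [← Finset.sum_sub_distrib]; exact Finset.sum_congr rfl fun i _ => by ring]
    rw [Finset.sum_range_succ' (fun i => g a i * f i) M,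
        Finset.sum_range_succ (fun i => g a i * f (i+1)) M]
    ring
  rw [L, R, g_eq_zero h]
  have : g (a+1) 0 = g a 0 := by simp [g]
  rw [this]
  have e : ∑ i ∈ range M, g (a+1) (i+1) * f (i+1)
      = ∑ i ∈ range M, (g a (i+1) * f (i+1) - g a i * f (i+1)) := by
    refine Finset.sum_congr rfl fun i _ => ?_
    rw [g_succ]; ring
  rw [e, Finset.sum_sub_distrib]; ring

noncomputable def Sg (M a b c : ℕ) (u : ℕ → ℕ → ℕ → ℝ) : ℝ :=
  ∑ i ∈ range (M+1), g a i * ∑ j ∈ range (M+1), g b j * ∑ k ∈ range (M+1), g c k * u i j k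

lemma SgA {M a : ℕ} (b c : ℕ) (h : a < M) (u : ℕ → ℕ → ℕ → ℝ) :
    Sg M (a+1) b c u = Sg M a b c (fun i j k => u i j k - u (i+1) j k) := by
  unfold Sg
  rw [shift h (fun i => ∑ j ∈ range (M+1), g b j * ∑ k ∈ range (M+1), g c k * u i j k)]
  refine Finset.sum_congr rfl fun i _ => ?_
  simp only [← Finset.sum_sub_distrib, ← mul_sub]

lemma SgB {M b : ℕ} (a c : ℕ) (h : b < M) (u : ℕ → ℕ → ℕ → ℝ) :
    Sg M a (b+1) c u = Sg M a b c (fun i j k => u i j k - u i (j+1) k) := by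
  unfold Sg
  refine Finset.sum_congr rfl fun i _ => ?_
  congr 1
  rw [shift h (fun j => ∑ k ∈ range (M+1), g c k * u i j k)]
  refine Finset.sum_congr rfl fun j _ => ?_
  simp only [← Finset.sum_sub_distrib, ← mul_sub]

lemma SgC {M c : ℕ} (a b : ℕ) (h : c < M) (u : ℕ → ℕ → ℕ → ℝ) :
    Sg M a b (c+1) u = Sg M a b c (fun i j k => u i j k - u i j (k+1)) := by
  unfold Sg
  refine Finset.sum_congr rfl fun i _ => ?_
  congr 1
  refine Finset.sum_congr rfl fun j _ => ?_
  congr 1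
  exact shift h (fun k => u i j k)

lemma Sg_add {M a b c : ℕ} (u v : ℕ → ℕ → ℕ → ℝ) :
    Sg M a b c u + Sg M a b c v = Sg M a b c (fun i j k => u i j k + v i j k) := by
  simp only [Sg, ← Finset.sum_add_distrib, ← mul_add]

lemma Sg_sub {M a b c : ℕ} (u v : ℕ → ℕ → ℕ → ℝ) :
    Sg M a b c u - Sg M a b c v = Sg M a b c (fun i j k => u i j k - v i j k) := by
  simp only [Sg, ← Finset.sum_sub_distrib, ← mul_sub]

lemma Sg_congr {M a b c : ℕ} {u v : ℕ → ℕ → ℕ → ℝ}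
    (h : ∀ i j k, g a i * (g b j * (g c k * u i j k)) = g a i * (g b j * (g c k * v i j k))) :
    Sg M a b c u = Sg M a b c v := by
  simp only [Sg, Finset.mul_sum]
  exact Finset.sum_congr rfl fun i _ => Finset.sum_congr rfl fun j _ =>
    Finset.sum_congr rfl fun k _ => h i j k

noncomputable def F (a b c : ℕ) : ℝ :=
  ∑ i ∈ range (a+1), g a i * ∑ j ∈ range (b+1), g b j * ∑ k ∈ range (c+1), g c k * T i j k

lemma sum_pad {a M : ℕ} (h : a ≤ M) (v : ℕ → ℝ) :
    ∑ i ∈ range (a+1), g a i * v i = ∑ i ∈ range (M+1), g a i * v i := by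
  refine Finset.sum_subset (Finset.range_subset_range.2 (by omega)) (fun i _ hi => ?_)
  have : a < i := by simpa using hi
  simp [g_eq_zero this]

lemma F_eq_Sg {a b c M : ℕ} (ha : a ≤ M) (hb : b ≤ M) (hc : c ≤ M) :
    F a b c = Sg M a b c T := by
  unfold F Sg
  rw [sum_pad ha]
  refine Finset.sum_congr rfl fun i _ => ?_
  congr 1
  rw [sum_pad hb]
  refine Finset.sum_congr rfl fun j _ => ?_
  congr 1
  rw [sum_pad hc]

lemma F000 : F 0 0 0 = 1 := by
  simp [F, g, T]

lemma Sg_zero {M a b c : ℕ} : Sg M a b c (fun _ _ _ => 0) = 0 := by simp [Sg]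

lemma FA0 (a : ℕ) : F (a+1) 0 0 = 0 := by
  rw [F_eq_Sg (M := a+1) (by omega) (by omega) (by omega), SgA 0 0 (by omega)]
  rw [show (0:ℝ) = Sg (a+1) a 0 0 (fun _ _ _ => 0) from Sg_zero.symm]
  refine Sg_congr fun i j k => ?_
  match j, k with
  | 0, 0 => simp [T_zero]
  | j+1, _ => simp [g_eq_zero (show 0 < j+1 by omega)]
  | 0, k+1 => simp [g_eq_zero (show 0 < k+1 by omega)]

lemma F0B0 (b : ℕ) : F 0 (b+1) 0 = 0 := by
  rw [F_eq_Sg (M := b+1) (by omega) (by omega) (by omega), SgB 0 0 (by omega)]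
  rw [show (0:ℝ) = Sg (b+1) 0 b 0 (fun _ _ _ => 0) from Sg_zero.symm]
  refine Sg_congr fun i j k => ?_
  match i, k with
  | 0, 0 => simp [show ∀ j, T 0 j 0 = 1 by intro j; simp [T, Nat.factorial_ne_zero]]
  | i+1, _ => simp [g_eq_zero (show 0 < i+1 by omega)]
  | 0, k+1 => simp [g_eq_zero (show 0 < k+1 by omega)]

lemma F00C (c : ℕ) : F 0 0 (c+1) = 0 := by
  rw [F_eq_Sg (M := c+1) (by omega) (by omega) (by omega), SgC 0 0 (by omega)]
  rw [show (0:ℝ) = Sg (c+1) 0 0 c (fun _ _ _ => 0) from Sg_zero.symm]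
  refine Sg_congr fun i j k => ?_
  match i, j with
  | 0, 0 => simp [show ∀ k, T 0 0 k = 1 by intro k; simp [T, Nat.factorial_ne_zero]]
  | i+1, _ => simp [g_eq_zero (show 0 < i+1 by omega)]
  | 0, j+1 => simp [g_eq_zero (show 0 < j+1 by omega)]

lemma FAB0 (a b : ℕ) : F (a+1) (b+1) 0 = F a b 0 := by
  have M := a+b+2
  rw [F_eq_Sg (M := a+b+2) (by omega) (by omega) (by omega),
      F_eq_Sg (M := a+b+2) (by omega) (by omega) (by omega),
      SgA (b+1) 0 (by omega), SgB a 0 (by omega)]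
  refine Sg_congr fun i j k => ?_
  match k with
  | 0 => linear_combination (g a i * (g b j * g 0 0)) * pascalC i j
  | k+1 => simp [g_eq_zero (show 0 < k+1 by omega)]

lemma FA0C (a c : ℕ) : F (a+1) 0 (c+1) = F a 0 c := by
  rw [F_eq_Sg (M := a+c+2) (by omega) (by omega) (by omega),
      F_eq_Sg (M := a+c+2) (by omega) (by omega) (by omega),
      SgA 0 (c+1) (by omega), SgC a 0 (by omega)]
  refine Sg_congr fun i j k => ?_
  match j with
  | 0 => linear_combination (g a i * (g 0 0 * g c k)) * pascalB i k
  | j+1 => simp [g_eq_zero (show 0 < j+1 by omega)]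

lemma F0BC (b c : ℕ) : F 0 (b+1) (c+1) = F 0 b c := by
  rw [F_eq_Sg (M := b+c+2) (by omega) (by omega) (by omega),
      F_eq_Sg (M := b+c+2) (by omega) (by omega) (by omega),
      SgB 0 (c+1) (by omega), SgC 0 b (by omega)]
  refine Sg_congr fun i j k => ?_
  match i with
  | 0 => linear_combination (g 0 0 * (g b j * g c k)) * pascalA j k
  | i+1 => simp [g_eq_zero (show 0 < i+1 by omega)]

lemma FABC (a b c : ℕ) : F (a+1) (b+1) (c+1)
    = F (a+1) b c + F a (b+1) c + F a b (c+1) - 2 * F a b c := by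
  have hM : ∀ x y z : ℕ, x ≤ a+b+c+2 → y ≤ a+b+c+2 → z ≤ a+b+c+2 → True := fun _ _ _ _ _ _ => trivial
  rw [F_eq_Sg (M := a+b+c+2) (by omega) (by omega) (by omega),
      F_eq_Sg (M := a+b+c+2) (by omega) (by omega) (by omega),
      F_eq_Sg (M := a+b+c+2) (by omega) (by omega) (by omega),
      F_eq_Sg (M := a+b+c+2) (by omega) (by omega) (by omega),
      F_eq_Sg (M := a+b+c+2) (by omega) (by omega) (by omega)]
  rw [SgA (b+1) (c+1) (by omega), SgB a (c+1) (by omega), SgC a b (by omega),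
      SgA b c (by omega), SgB a c (by omega), SgC a b (by omega)]
  rw [two_mul, Sg_add, Sg_add, Sg_add, Sg_sub]
  refine Sg_congr fun i j k => ?_
  linear_combination (-(g a i * (g b j * g c k))) * pascal3 i j k

def Ncoef : ℕ → ℕ → ℕ → ℕ
  | 0, 0, 0 => 1
  | _+1, 0, 0 => 0
  | 0, _+1, 0 => 0
  | 0, 0, _+1 => 0
  | a+1, b+1, 0 => Ncoef a b 0
  | a+1, 0, c+1 => Ncoef a 0 c
  | 0, b+1, c+1 => Ncoef 0 b c
  | a+1, b+1, c+1 => Ncoef (a+1) b c + Ncoef a (b+1) c + Ncoef a b (c+1) + 2 * Ncoef a b c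
  termination_by a b c => a + b + c

lemma main_comb : ∀ a b c : ℕ, (-1:ℝ) ^ (a+b+c) * F a b c = (Ncoef a b c : ℝ) := by
  intro a b c
  induction a, b, c using Ncoef.induct with
  | case1 => simp [F000, Ncoef]
  | case2 a => simp [FA0 a, Ncoef]
  | case3 b => simp [F0B0 b, Ncoef]
  | case4 c => simp [F00C c, Ncoef]
  | case5 a b ih =>
    rw [show Ncoef (a+1) (b+1) 0 = Ncoef a b 0 from by rw [Ncoef]]
    rw [FAB0, ← ih]
    rw [show a+1+(b+1)+0 = (a+b+0)+2 from by omega, pow_add]; ring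
  | case6 a c ih =>
    rw [show Ncoef (a+1) 0 (c+1) = Ncoef a 0 c from by rw [Ncoef]]
    rw [FA0C, ← ih]
    rw [show a+1+0+(c+1) = (a+0+c)+2 from by omega, pow_add]; ring
  | case7 b c ih =>
    rw [show Ncoef 0 (b+1) (c+1) = Ncoef 0 b c from by rw [Ncoef]]
    rw [F0BC, ← ih]
    rw [show 0+(b+1)+(c+1) = (0+b+c)+2 from by omega, pow_add]; ring
  | case8 a b c ih1 ih2 ih3 ih4 =>
    rw [show Ncoef (a+1) (b+1) (c+1) = Ncoef (a+1) b c + Ncoef a (b+1) c + Ncoef a b (c+1)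
        + 2 * Ncoef a b c from by rw [Ncoef]]
    rw [FABC]
    push_cast
    rw [← ih1, ← ih2, ← ih3, ← ih4]
    rw [show a+1+(b+1)+(c+1) = (a+b+c)+3 from by omega,
        show a+1+b+c = (a+b+c)+1 from by omega,
        show a+(b+1)+c = (a+b+c)+1 from by omega,
        show a+b+(c+1) = (a+b+c)+1 from by omega, pow_add, pow_add]
    ring

lemma intg_pow_exp (n : ℕ) : IntegrableOn (fun x : ℝ => x ^ n * Real.exp (-x)) (Ioi 0) := by
  have h := Real.GammaIntegral_convergent (s := n + 1) (by positivity)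
  refine (h.congr_fun (fun x hx => ?_) measurableSet_Ioi)
  rw [show ((n:ℝ) + 1 - 1) = (n:ℝ) by ring]; simp only [Real.rpow_natCast]
  ring

lemma integral_pow_exp (n : ℕ) : ∫ x in Ioi (0:ℝ), x ^ n * Real.exp (-x) = n ! := by
  have h := Real.Gamma_eq_integral (s := (n:ℝ) + 1) (by positivity)
  rw [Real.Gamma_nat_eq_factorial] at h
  rw [h]
  refine setIntegral_congr_fun measurableSet_Ioi (fun x hx => ?_)
  rw [show ((n:ℝ) + 1 - 1) = (n:ℝ) by ring, Real.rpow_natCast]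
  ring

lemma sum3_comm (s t u : Finset ℕ) (f : ℕ → ℕ → ℕ → ℝ) :
    ∑ i ∈ s, ∑ j ∈ t, ∑ k ∈ u, f i j k = ∑ k ∈ u, ∑ j ∈ t, ∑ i ∈ s, f i j k := by
  rw [Finset.sum_comm (s := s) (t := t) (f := fun i j => ∑ k ∈ u, f i j k),
     Finset.sum_comm (s := u) (t := t) (f := fun k j => ∑ i ∈ s, f i j k)]
  exact Finset.sum_congr rfl fun j _ => Finset.sum_comm (s := s) (t := u) (f := fun i k => f i j k)

lemma integral_eq_F (a b c : ℕ) :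
    (∫ x in Ioi (0:ℝ), laguerre a x * laguerre b x * laguerre c x * Real.exp (-x)) = F a b c := by
  have hpt : ∀ x : ℝ, laguerre a x * laguerre b x * laguerre c x * Real.exp (-x)
      = ∑ p ∈ (range (c+1)) ×ˢ ((range (b+1)) ×ˢ (range (a+1))),
          (g a p.2.2 / (p.2.2)! * (g b p.2.1 / (p.2.1)!) * (g c p.1 / (p.1)!))
            * (x ^ (p.2.2 + p.2.1 + p.1) * Real.exp (-x)) := by
    intro x
    simp only [Finset.sum_product]
    simp only [laguerre, Finset.sum_mul, Finset.mul_sum]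
    refine Finset.sum_congr rfl fun k _ => Finset.sum_congr rfl fun j _ =>
      Finset.sum_congr rfl fun i _ => ?_
    simp only [g, pow_add]
    ring
  simp only [hpt]
  rw [MeasureTheory.integral_finset_sum]
  · simp only [MeasureTheory.integral_const_mul, integral_pow_exp]
    simp only [Finset.sum_product]
    simp only [F, Finset.mul_sum]
    rw [sum3_comm]
    refine Finset.sum_congr rfl fun k _ => Finset.sum_congr rfl fun j _ =>
      Finset.sum_congr rfl fun i _ => ?_
    simp only [T]
    have h1 : ((i)! : ℝ) ≠ 0 := Nat.cast_ne_zero.2 (Nat.factorial_ne_zero i)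
    have h2 : ((j)! : ℝ) ≠ 0 := Nat.cast_ne_zero.2 (Nat.factorial_ne_zero j)
    have h3 : ((k)! : ℝ) ≠ 0 := Nat.cast_ne_zero.2 (Nat.factorial_ne_zero k)
    field_simp
  · intro p _
    exact ((intg_pow_exp (p.2.2 + p.2.1 + p.1)).const_mul _)

end LagAux

/-- The signed Laguerre linearization coefficient
`E(n₁, n₂, n₃) = (−1)^{n₁+n₂+n₃} ∫₀^∞ L_{n₁}(x) L_{n₂}(x) L_{n₃}(x) e^{−x} dx`
is a nonnegative integer. -/
theorem laguerre_linearization_coeff_nat (n₁ n₂ n₃ : ℕ) :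
    ∃ m : ℕ,
      (-1 : ℝ) ^ (n₁ + n₂ + n₃) *
          (∫ x in Set.Ioi (0 : ℝ),
            laguerre n₁ x * laguerre n₂ x * laguerre n₃ x * Real.exp (-x)) = (m : ℝ) := by
  exact ⟨LagAux.Ncoef n₁ n₂ n₃, by rw [LagAux.integral_eq_F]; exact LagAux.main_comb n₁ n₂ n₃⟩
end
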